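/- Let π: M̃ → M = M̃/Γ be a semi-Riemannian covering by a connected manifold M̃ with Γ properly discontinuous isometries, p ∈ M, p̃ ∈ π^{-1}(p). Then the map Φ: Γ → Hol_p(M)/ι(Hol_{p̃}(M̃)), sending σ to the class of P_γ where γ is a loop at p whose lift starting at p̃ ends at σ^{-1}(p̃), is a well-defined surjective group homomorphism. -/

import Mathlib

/-!
STATEMENT 7: For a semi-Riemannian covering `π : M̃ → M = M̃/Γ` with `M̃` connected and
`Γ` a (properly discontinuous) group of isometries acting transitively on fibers, the map
`Φ : Γ → Hol_p(M)/ι(Hol_{pt}(M̃))`, sending `σ` to the class of the parallel transport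
along a loop at `p = π pt` whose lift starting at `pt` ends at `σ⁻¹ • pt`, is a
well-defined surjective group homomorphism.

Parallel transport is modeled by an abstract `TransportSystem` (see statement 6); the
quotient statement is expressed via cosets of the image subgroup
`ιIm = {P_{π∘γ} : γ loop at pt}` inside the holonomy group of `M`.
-/

/-- An abstract system of parallel transports along paths in `M`, acting on a vector
space `V` (the tangent space in a fixed trivialization). -/
structure TransportSystem (M : Type) [TopologicalSpace M]
    (V : Type) [AddCommGroup V] [Module ℝ V] where
  P : ∀ {x y : M}, Path x y → (V ≃ₗ[ℝ] V)
  P_refl : ∀ x : M, P (Path.refl x) = LinearEquiv.refl ℝ V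
  P_trans : ∀ {x y z : M} (γ : Path x y) (δ : Path y z),
    P (γ.trans δ) = (P γ).trans (P δ)
  P_symm : ∀ {x y : M} (γ : Path x y), P γ.symm = (P γ).symm


open Set

/-- One-step extension of a partial lift through a trivialization. -/
theorem lift_extend {E X : Type} [TopologicalSpace E] [TopologicalSpace X]
    {f : E → X} (δ : C(unitInterval, X)) (e : E)
    {F : Type} [TopologicalSpace F] (T : Bundle.Trivialization F f)
    {t t' : ℝ} (ht0 : 0 ≤ t) (htt' : t ≤ t') (ht'1 : t' ≤ 1)
    (hbase : ∀ s : unitInterval, t ≤ (s : ℝ) → (s : ℝ) ≤ t' → δ s ∈ T.baseSet)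
    (hQ : ∃ g : C(unitInterval, E), g 0 = e ∧ ∀ s : unitInterval, (s : ℝ) ≤ t → f (g s) = δ s) :
    ∃ g : C(unitInterval, E), g 0 = e ∧ ∀ s : unitInterval, (s : ℝ) ≤ t' → f (g s) = δ s := by
  obtain ⟨g, hg0, hg⟩ := hQ
  have ht1 : t ≤ 1 := le_trans htt' ht'1
  set tI : unitInterval := ⟨t, ht0, ht1⟩ with htI
  have hft : f (g tI) = δ tI := hg tI le_rfl
  have hbt : δ tI ∈ T.baseSet := hbase tI le_rfl htt'
  have hsrc : g tI ∈ T.source := T.mem_source.mpr (by rw [hft]; exact hbt)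
  set c : F := (T (g tI)).2 with hc
  have hqmem : ∀ s : unitInterval, max t (min (s : ℝ) t') ∈ unitInterval := by
    intro s
    exact ⟨le_trans ht0 (le_max_left _ _), max_le ht1 (le_trans (min_le_right _ _) ht'1)⟩
  set q : unitInterval → unitInterval := fun s => ⟨max t (min (s : ℝ) t'), hqmem s⟩ with hq
  have hqcont : Continuous q :=
    Continuous.subtype_mk (continuous_const.max (continuous_subtype_val.min continuous_const)) _
  have hqbase : ∀ s : unitInterval, δ (q s) ∈ T.baseSet := fun s =>
    hbase (q s) (le_max_left _ _) (max_le htt' (min_le_right _ _))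
  have hcont2 : Continuous fun s : unitInterval => T.toOpenPartialHomeomorph.symm (δ (q s), c) := by
    apply T.toOpenPartialHomeomorph.continuousOn_symm.comp_continuous
    · exact (δ.continuous.comp hqcont).prodMk continuous_const
    · intro s
      exact T.mem_target.mpr (hqbase s)
  have hagree : ∀ s : unitInterval, (s : ℝ) = t →
      g s = T.toOpenPartialHomeomorph.symm (δ (q s), c) := by
    intro s hs
    have hst : s = tI := Subtype.ext hs
    have hqt : q s = tI := by
      apply Subtype.ext
      show max t (min (s : ℝ) t') = t
      rw [hs, min_eq_left htt', max_self]
    rw [hqt, hst, ← hft, hc]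
    exact (T.symm_apply_mk_proj hsrc).symm
  have hcontg' : Continuous fun s : unitInterval =>
      if (s : ℝ) ≤ t then g s else T.toOpenPartialHomeomorph.symm (δ (q s), c) :=
    Continuous.if_le g.continuous hcont2 continuous_subtype_val continuous_const hagree
  refine ⟨⟨_, hcontg'⟩, ?_, ?_⟩
  · show (if ((0 : unitInterval) : ℝ) ≤ t then g 0 else _) = e
    rw [if_pos (by exact_mod_cast ht0), hg0]
  · intro s hs
    show f (if (s : ℝ) ≤ t then g s else T.toOpenPartialHomeomorph.symm (δ (q s), c)) = δ s
    by_cases h : (s : ℝ) ≤ t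
    · rw [if_pos h]; exact hg s h
    · rw [if_neg h]
      push_neg at h
      have hqs : q s = s := by
        apply Subtype.ext
        show max t (min (s : ℝ) t') = (s : ℝ)
        rw [min_eq_left hs, max_eq_right h.le]
      rw [T.proj_symm_apply (T.mem_target.mpr (hqbase s)), hqs]

/-- Path lifting for covering maps. -/
theorem covering_lift_path {E X : Type} [TopologicalSpace E] [TopologicalSpace X]
    {f : E → X} (hf : IsCoveringMap f) (δ : C(unitInterval, X)) (e : E) (he : f e = δ 0) :
    ∃ g : C(unitInterval, E), g 0 = e ∧ ∀ s : unitInterval, f (g s) = δ s := by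
  obtain ⟨g, hg, hg0⟩ := hf.exists_path_lifts δ e he.symm
  exact ⟨g, hg0, fun s => congrFun hg s⟩

/-- Parallel transport only depends on the underlying map of the path. -/
theorem TransportSystem.P_congr {M : Type} [TopologicalSpace M] {V : Type} [AddCommGroup V]
    [Module ℝ V] (S : TransportSystem M V) {x y x' y' : M} (γ : Path x y) (δ : Path x' y')
    (h : ∀ t, γ t = δ t) : S.P γ = S.P δ := by
  have hx : x = x' := by rw [← γ.source, ← δ.source]; exact h 0
  have hy : y = y' := by rw [← γ.target, ← δ.target]; exact h 1
  subst hx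
  subst hy
  have : γ = δ := by ext t; exact h t
  rw [this]

/-- `Φ : Γ → Hol_p(M)/ι(Hol_{pt}(M̃))` is a well-defined surjective
group homomorphism. -/
theorem holonomy_covering_deck_surjective
    (Mt M : Type) [TopologicalSpace Mt] [TopologicalSpace M] [PathConnectedSpace Mt]
    (Vt V : Type) [AddCommGroup Vt] [Module ℝ Vt] [AddCommGroup V] [Module ℝ V]
    (St : TransportSystem Mt Vt) (S : TransportSystem M V)
    (π : Mt → M) (hπ : Continuous π) (hcov : IsCoveringMap π)
    (dπ : ∀ _ : Mt, Vt ≃ₗ[ℝ] V)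
    (hcompat : ∀ (x y : Mt) (γ : Path x y) (v : Vt),
      S.P (γ.map hπ) (dπ x v) = dπ y (St.P γ v))
    -- the deck transformation group Γ, acting by isometries with π ∘ σ = π,
    -- transitively on fibers:
    (Γ : Type) [Group Γ] [MulAction Γ Mt]
    (hcont : ∀ σ : Γ, Continuous fun x : Mt => σ • x)
    (hfib : ∀ (σ : Γ) (x : Mt), π (σ • x) = π x)
    (htrans : ∀ x y : Mt, π x = π y → ∃ σ : Γ, σ • x = y)
    -- the differentials of the deck transformations, compatible with transport:
    (D : Γ → Mt → (Vt ≃ₗ[ℝ] Vt))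
    (hD : ∀ (σ : Γ) (x y : Mt) (γ : Path x y) (v : Vt),
      D σ y (St.P γ v) = St.P (γ.map (hcont σ)) (D σ x v))
    (pt : Mt) :
    -- `ιIm` is the image of `Hol_{pt}(M̃)` in `Hol_p(M)`:
    ∀ ιIm : Set (V ≃ₗ[ℝ] V),
      ιIm = {g | ∃ γ : Path pt pt, g = S.P (γ.map hπ)} →
      -- Φ is well defined: two loops at p whose lifts end at σ⁻¹ • pt give the same coset
      ((∀ (σ : Γ) (γ δ : Path pt (σ⁻¹ • pt)),
          S.P (δ.map hπ) * (S.P (γ.map hπ))⁻¹ ∈ ιIm) ∧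
      -- Φ is a group homomorphism: Φ(σ₁)·Φ(σ₂) = Φ(σ₁σ₂)
      (∀ (σ₁ σ₂ : Γ) (γ₁ : Path pt (σ₁⁻¹ • pt)) (γ₂ : Path pt (σ₂⁻¹ • pt))
          (γ : Path pt ((σ₁ * σ₂)⁻¹ • pt)),
          S.P (γ.map hπ) * ((S.P (γ₂.map hπ)).trans (S.P (γ₁.map hπ)))⁻¹ ∈ ιIm) ∧
      -- Φ is surjective: every loop at p is a representative of some Φ(σ)
      (∀ δ : Path (π pt) (π pt), ∃ (σ : Γ) (γ : Path pt (σ⁻¹ • pt)),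
          ∀ t : unitInterval, π (γ t) = δ t)) := by
  intro ιIm hιIm
  -- Key: well-definedness
  have key : ∀ (σ : Γ) (γ δ : Path pt (σ⁻¹ • pt)),
      S.P (δ.map hπ) * (S.P (γ.map hπ))⁻¹ ∈ ιIm := by
    intro σ γ δ
    have hA : pt = σ • σ⁻¹ • pt := (smul_inv_smul σ pt).symm
    set a : Path pt (σ • pt) := (γ.symm.map (hcont σ)).cast hA rfl with ha
    set b : Path (σ • pt) pt := (δ.map (hcont σ)).cast rfl hA with hb
    set ℓ : Path pt pt := a.trans b with hℓ
    rw [hιIm]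
    refine ⟨ℓ, ?_⟩
    have h1 : S.P (ℓ.map hπ) = (S.P (a.map hπ)).trans (S.P (b.map hπ)) := by
      rw [hℓ, Path.map_trans, S.P_trans]
    have h2 : S.P (a.map hπ) = S.P ((γ.map hπ).symm) := by
      apply S.P_congr
      intro t
      show π (σ • (γ.symm t)) = π (γ.symm t)
      exact hfib _ _
    have h3 : S.P (b.map hπ) = S.P (δ.map hπ) := by
      apply S.P_congr
      intro t
      show π (σ • (δ t)) = π (δ t)
      exact hfib _ _
    rw [h1, h2, h3, S.P_symm]
    rfl
  refine ⟨key, ?_, ?_⟩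
  · -- homomorphism
    intro σ₁ σ₂ γ₁ γ₂ γ
    have hend : (σ₁ * σ₂)⁻¹ • pt = σ₂⁻¹ • σ₁⁻¹ • pt := by rw [mul_inv_rev, mul_smul]
    set η : Path pt ((σ₁ * σ₂)⁻¹ • pt) :=
      γ₂.trans ((γ₁.map (hcont σ₂⁻¹)).cast rfl hend) with hηdef
    have hη : S.P (η.map hπ) = (S.P (γ₂.map hπ)).trans (S.P (γ₁.map hπ)) := by
      rw [hηdef, Path.map_trans, S.P_trans]
      congr 1
      apply S.P_congr
      intro t
      show π (σ₂⁻¹ • (γ₁ t)) = π (γ₁ t)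
      exact hfib _ _
    have h := key (σ₁ * σ₂) η γ
    rwa [hη] at h
  · -- surjectivity via path lifting
    intro δ
    obtain ⟨g, hg0, hg⟩ := covering_lift_path hcov δ.toContinuousMap pt δ.source.symm
    have hend : π (g 1) = π pt := by rw [hg 1]; exact δ.target
    obtain ⟨σ, hσ⟩ := htrans (g 1) pt hend
    have hend2 : g 1 = σ⁻¹ • pt := by rw [← hσ, inv_smul_smul]
    exact ⟨σ, { toContinuousMap := g, source' := hg0, target' := hend2 },
      fun t => hg t⟩
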